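/- Let T be a triangulated category, X a full subcategory closed under extensions and direct summands, and let ξ : x → u be an X-envelope of an object x (a left minimal X-preenvelope). Complete ξ to a distinguished triangle y → x → u → Σy. Then Hom_T(y, w) = 0 for every w ∈ X. -/

import Mathlib

open CategoryTheory Limits Pretriangulated

/-- Let `T` be a triangulated category and `X` a full subcategory closed under
extensions and direct summands. If `ξ : x → u` is an `X`-envelope (a left minimal
`X`-preenvelope), completed to a distinguished triangle `y → x → u → Σy`, then
`Hom(y, w) = 0` for every `w ∈ X`. -/
theorem envelope_cone_hom_zero
    {T : Type*} [Category T] [Preadditive T] [HasZeroObject T] [HasShift T ℤ]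
    [∀ n : ℤ, (CategoryTheory.shiftFunctor T n).Additive] [Pretriangulated T]
    (X : Set T)
    -- `X` is closed under extensions:
    (hext : ∀ (a b c : T) (f : a ⟶ b) (g : b ⟶ c) (h : c ⟶ a⟦(1 : ℤ)⟧),
      Triangle.mk f g h ∈ (distTriang T) → a ∈ X → c ∈ X → b ∈ X)
    -- `X` is closed under direct summands (retracts):
    (hsum : ∀ (a u : T), u ∈ X → (∃ (s : a ⟶ u) (r : u ⟶ a), s ≫ r = 𝟙 a) → a ∈ X)
    (x u : T) (hu : u ∈ X) (ξ : x ⟶ u)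
    -- `ξ` is an `X`-preenvelope:
    (hpre : ∀ w ∈ X, ∀ f : x ⟶ w, ∃ g : u ⟶ w, ξ ≫ g = f)
    -- `ξ` is left minimal:
    (hmin : ∀ φ : u ⟶ u, ξ ≫ φ = ξ → IsIso φ)
    -- a distinguished triangle `y → x → u → Σy` completing `ξ`:
    (y : T) (α : y ⟶ x) (h : u ⟶ y⟦(1 : ℤ)⟧)
    (hT : Triangle.mk α ξ h ∈ distTriang T) :
    ∀ w ∈ X, ∀ f : y ⟶ w, f = 0 := by
  intro w hw f
  -- complete `h ≫ f⟦1⟧` to a distinguished triangle `w → e → u → w⟦1⟧`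
  obtain ⟨e, i, p, hT₂⟩ := distinguished_cocone_triangle₂ (h ≫ f⟦(1 : ℤ)⟧')
  -- triangle morphism `(f, b, 𝟙 u)`
  obtain ⟨b, hb₁, hb₂⟩ := complete_distinguished_triangle_morphism₂
    (Triangle.mk α ξ h) (Triangle.mk i p (h ≫ f⟦(1 : ℤ)⟧')) hT hT₂ f (𝟙 u)
    (by exact (Category.id_comp _).symm)
  simp only [Triangle.mk_obj₂, Triangle.mk_mor₂, Category.comp_id] at hb₂
  -- `e ∈ X` as an extension of `u` by `w`
  have he : e ∈ X := hext w e u i p _ hT₂ hw hu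
  -- `b` factors through `ξ`
  obtain ⟨γ, hγ⟩ := hpre e he b
  -- `γ ≫ p` is an isomorphism by minimality
  have hiso : IsIso (γ ≫ p) := hmin _ (by rw [← Category.assoc, hγ]; exact hb₂.symm.trans (Category.comp_id _))
  -- hence `p` is a split epi, so the connecting morphism vanishes
  have hδ : h ≫ f⟦(1 : ℤ)⟧' = 0 := by
    have hz : p ≫ (h ≫ f⟦(1 : ℤ)⟧') = 0 :=
      comp_distTriang_mor_zero₂₃ _ hT₂
    calc h ≫ f⟦(1 : ℤ)⟧'
        = inv (γ ≫ p) ≫ (γ ≫ p) ≫ (h ≫ f⟦(1 : ℤ)⟧') := by simp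
      _ = inv (γ ≫ p) ≫ γ ≫ (p ≫ (h ≫ f⟦(1 : ℤ)⟧')) := by
          simp only [Category.assoc]
      _ = 0 := by rw [hz]; simp
  -- `i` is a split mono
  obtain ⟨r, hr⟩ := Triangle.yoneda_exact₂ _
    (inv_rot_of_distTriang _ hT₂) (𝟙 w) (by
      change (-(shiftFunctor T (-1)).map (h ≫ f⟦(1 : ℤ)⟧') ≫ _) ≫ 𝟙 w = 0
      rw [hδ]
      simp
      exact zero_comp)
  -- `f ≫ i = α ≫ b = α ≫ ξ ≫ γ = 0`
  have hfi : f ≫ i = 0 := by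
    have h12 : α ≫ ξ = 0 := comp_distTriang_mor_zero₁₂ _ hT
    calc f ≫ i = α ≫ ξ ≫ γ := by rw [hγ]; exact hb₁.symm
      _ = 0 := by rw [← Category.assoc, h12, zero_comp]
  change 𝟙 w = i ≫ r at hr
  calc f = f ≫ 𝟙 w := by simp
    _ = f ≫ i ≫ r := by rw [hr]
    _ = 0 := (Category.assoc f i r).symm.trans (by rw [hfi]; exact zero_comp)
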